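/- Let K be a nontrivial commutative unital ring and G a finite groupoid, with morphism list s_1,…,s_n exhausting all of mor(G) (possibly with repetitions) such that {s_1,…,s_n} = mor(G). Define R_s ⊆ M_n(K) as the K-span of e_{ij} with s_i s = s_j, and R = Σ_{s∈G} R_s. Then R is a unital strongly G-graded ring with R_s ≠ 0 for all s ∈ G, and the sum R = ⊕_{s∈G} R_s is direct. -/

import Mathlib

open Pointwise CategoryTheory

/-- `SComp a b c` : the morphisms `a` and `b` (as objects of the total morphism type) are
composable in the sense `d(a) = c(b)`, and `c = ab` is their composite. -/
def SComp {Obj : Type*} [Category Obj] (a b c : Σ e f : Obj, e ⟶ f) : Prop :=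
  ∃ h : b.2.1 = a.1, c = ⟨b.1, a.2.1, (b.2.2 ≫ eqToHom h) ≫ a.2.2⟩

/-- The homogeneous component `R_t ⊆ M_n(K)`: the `K`-span of the matrix units `e_{ij}`
with `s_i t = s_j`. -/
def matDeg {Obj : Type*} [Category Obj] (K : Type*) [CommRing K] {n : ℕ}
    (s : Fin n → Σ e f : Obj, e ⟶ f) (t : Σ e f : Obj, e ⟶ f) :
    Submodule K (Matrix (Fin n) (Fin n) K) :=
  Submodule.span K
    {M | ∃ i j : Fin n, SComp (s i) t (s j) ∧ M = Matrix.single i j (1 : K)}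

section Aux

variable {Obj : Type*} [Category Obj]

/-- The composite morphism (as an element of the total morphism type). -/
def sMul (a b : Σ e f : Obj, e ⟶ f) (h : b.2.1 = a.1) : Σ e f : Obj, e ⟶ f :=
  ⟨b.1, a.2.1, (b.2.2 ≫ eqToHom h) ≫ a.2.2⟩

lemma scomp_iff {a b c : Σ e f : Obj, e ⟶ f} :
    SComp a b c ↔ ∃ h : b.2.1 = a.1, c = sMul a b h := Iff.rfl

lemma sMul_assoc (a b c : Σ e f : Obj, e ⟶ f) (h1 : b.2.1 = a.1) (h2 : c.2.1 = b.1) :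
    sMul a (sMul b c h2) h1 = sMul (sMul a b h1) c h2 := by
  obtain ⟨a1, a2, fa⟩ := a
  obtain ⟨b1, b2, fb⟩ := b
  obtain ⟨c1, c2, fc⟩ := c
  dsimp [sMul] at h1 h2 ⊢
  subst h1; subst h2
  simp [sMul]

lemma scomp_comp {x a y b z c : Σ e f : Obj, e ⟶ f}
    (h1 : SComp x a y) (h2 : SComp y b z) (h3 : SComp a b c) : SComp x c z := by
  obtain ⟨ha, rfl⟩ := h1
  obtain ⟨hb, rfl⟩ := h2
  obtain ⟨hc, rfl⟩ := h3
  exact ⟨ha, (sMul_assoc x a b ha hb).symm⟩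

lemma scomp_mid {x a b c z : Σ e f : Obj, e ⟶ f}
    (h1 : SComp x c z) (h3 : SComp a b c) :
    ∃ ha : a.2.1 = x.1, SComp x a (sMul x a ha) ∧ SComp (sMul x a ha) b z := by
  obtain ⟨hb, rfl⟩ := h3
  obtain ⟨hx, rfl⟩ := h1
  exact ⟨hx, ⟨hx, rfl⟩, ⟨hb, sMul_assoc x a b hx hb⟩⟩

lemma scomp_id (t : Σ e f : Obj, e ⟶ f) :
    SComp t ⟨t.1, t.1, 𝟙 t.1⟩ t := by
  obtain ⟨e, f, φ⟩ := t
  exact ⟨rfl, by simp [sMul]⟩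

lemma scomp_self_id (t : Σ e f : Obj, e ⟶ f) :
    SComp ⟨t.2.1, t.2.1, 𝟙 t.2.1⟩ t t := by
  obtain ⟨e, f, φ⟩ := t
  exact ⟨rfl, by simp [sMul]⟩

lemma scomp_cancel {Obj : Type*} [Groupoid Obj] {x t t' y : Σ e f : Obj, e ⟶ f}
    (h : SComp x t y) (h' : SComp x t' y) : t = t' := by
  obtain ⟨ht, hy⟩ := h
  obtain ⟨ht', hy'⟩ := h'
  obtain ⟨x1, x2, g⟩ := x
  obtain ⟨t1, t2, u⟩ := t
  obtain ⟨t1', t2', u'⟩ := t'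
  dsimp at ht ht'
  subst ht; subst ht'
  rw [hy'] at hy
  obtain ⟨h1, h2⟩ := Sigma.mk.inj_iff.mp hy
  subst h1
  obtain ⟨h3, h4⟩ := Sigma.mk.inj_iff.mp (eq_of_heq h2)
  have h5 := eq_of_heq h4
  simp only [eqToHom_refl, Category.comp_id, cancel_mono] at h5
  rw [h5]

/-- The submodule of matrices supported on a given set of positions. -/
def suppSub (K : Type*) [CommRing K] {n : ℕ} (X : Fin n → Fin n → Prop) :
    Submodule K (Matrix (Fin n) (Fin n) K) where
  carrier := {M | ∀ i j, ¬ X i j → M i j = 0}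
  add_mem' := by
    intro a b ha hb i j hij
    simp [Matrix.add_apply, ha i j hij, hb i j hij]
  zero_mem' := by intro i j _; simp
  smul_mem' := by
    intro c M hM i j hij
    simp [Matrix.smul_apply, hM i j hij]

lemma suppSub_mono (K : Type*) [CommRing K] {n : ℕ} {X Y : Fin n → Fin n → Prop}
    (h : ∀ i j, X i j → Y i j) : suppSub K X ≤ suppSub K Y := by
  intro M hM i j hij
  exact hM i j (fun hx => hij (h i j hx))

lemma matDeg_le_suppSub {Obj : Type*} [Category Obj] (K : Type*) [CommRing K] {n : ℕ}
    (s : Fin n → Σ e f : Obj, e ⟶ f) (t : Σ e f : Obj, e ⟶ f) :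
    matDeg K s t ≤ suppSub K (fun i j => SComp (s i) t (s j)) := by
  rw [matDeg, Submodule.span_le]
  rintro M ⟨i, j, hc, rfl⟩
  intro i' j' hij
  apply Matrix.single_apply_of_ne
  rintro ⟨rfl, rfl⟩
  exact hij hc

end Aux

/-- If `G` is a finite groupoid and `s_1, …, s_n` lists all morphisms of
`G` (possibly with repetitions), then `R = ∑_{t} R_t ⊆ M_n(K)` is a unital strongly
`G`-graded ring with all components nonzero, and the sum of the components is direct. -/
theorem matDeg_strongly_graded_groupoid {Obj : Type*} [Groupoid Obj]
    [Finite (Σ e f : Obj, e ⟶ f)]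
    (K : Type*) [CommRing K] [Nontrivial K]
    {n : ℕ} (s : Fin n → Σ e f : Obj, e ⟶ f)
    (hsurj : Function.Surjective s) :
    -- every component is nonzero
    (∀ t : Σ e f : Obj, e ⟶ f, matDeg K s t ≠ ⊥) ∧
    -- strongly graded
    (∀ a b c : Σ e f : Obj, e ⟶ f, SComp a b c →
      matDeg K s a * matDeg K s b = matDeg K s c) ∧
    -- `R_a R_b = 0` for non-composable pairs
    (∀ a b : Σ e f : Obj, e ⟶ f, (¬∃ c, SComp a b c) →
      matDeg K s a * matDeg K s b = ⊥) ∧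
    -- the sum `R = ⊕_t R_t` is direct
    iSupIndep (fun t : Σ e f : Obj, e ⟶ f => matDeg K s t) ∧
    -- `R` is unital
    (∃ u ∈ ⨆ t : Σ e f : Obj, e ⟶ f, matDeg K s t,
      ∀ r ∈ ⨆ t : Σ e f : Obj, e ⟶ f, matDeg K s t, u * r = r ∧ r * u = r) := by
  refine ⟨?_, ?_, ?_, ?_, ?_⟩
  · -- nonzero components
    intro t hbot
    obtain ⟨i, hi⟩ := hsurj ⟨t.2.1, t.2.1, 𝟙 t.2.1⟩
    obtain ⟨j, hj⟩ := hsurj t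
    have hmem : Matrix.single i j (1 : K) ∈ matDeg K s t := by
      apply Submodule.subset_span
      exact ⟨i, j, by rw [hi, hj]; exact scomp_self_id t, rfl⟩
    rw [hbot, Submodule.mem_bot] at hmem
    have : (Matrix.single i j (1 : K)) i j = 0 := by rw [hmem]; rfl
    rw [Matrix.single_apply_same] at this
    exact one_ne_zero this
  · -- strongly graded
    intro a b c habc
    rw [matDeg, matDeg, matDeg, Submodule.span_mul_span]
    apply le_antisymm
    · rw [Submodule.span_le]
      rintro m hm
      rw [Set.mem_mul] at hm
      obtain ⟨m1, ⟨i, j, h1, rfl⟩, m2, ⟨k, l, h2, rfl⟩, rfl⟩ := hm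
      by_cases hjk : j = k
      · subst hjk
        rw [Matrix.single_mul_single_same, one_mul]
        exact Submodule.subset_span ⟨i, l, scomp_comp h1 h2 habc, rfl⟩
      · rw [Matrix.single_mul_single_of_ne (h := hjk)]
        exact Submodule.zero_mem _
    · rw [Submodule.span_le]
      rintro m ⟨i, l, hil, rfl⟩
      obtain ⟨ha, h1, h2⟩ := scomp_mid hil habc
      obtain ⟨j, hj⟩ := hsurj (sMul (s i) a ha)
      rw [← hj] at h1 h2
      have : Matrix.single i l (1 : K) =
          Matrix.single i j (1 : K) * Matrix.single j l (1 : K) := by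
        rw [Matrix.single_mul_single_same, one_mul]
      rw [this]
      exact Submodule.subset_span
        (Set.mul_mem_mul ⟨i, j, h1, rfl⟩ ⟨j, l, h2, rfl⟩)
  · -- non-composable pairs
    intro a b hnc
    have hne : b.2.1 ≠ a.1 := fun h => hnc ⟨sMul a b h, h, rfl⟩
    rw [matDeg, matDeg, Submodule.span_mul_span, eq_bot_iff, Submodule.span_le]
    rintro m hm
    rw [Set.mem_mul] at hm
    obtain ⟨m1, ⟨i, j, h1, rfl⟩, m2, ⟨k, l, h2, rfl⟩, rfl⟩ := hm
    have hjk : j ≠ k := by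
      rintro rfl
      obtain ⟨ha, hja⟩ := h1
      obtain ⟨hb, _⟩ := h2
      apply hne
      rw [hb, hja]
    rw [Matrix.single_mul_single_of_ne (h := hjk)]
    simp
  · -- directness
    intro t
    rw [Submodule.disjoint_def]
    intro M hM hM'
    have hM1 : M ∈ suppSub K (fun i j => SComp (s i) t (s j)) :=
      matDeg_le_suppSub K s t hM
    have hM2 : M ∈ suppSub K (fun i j => ¬ SComp (s i) t (s j)) := by
      refine (iSup_le fun t' => iSup_le fun hne => ?_ : _ ≤ suppSub K _) hM'
      refine le_trans (matDeg_le_suppSub K s t') (suppSub_mono K ?_)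
      intro i j h' h
      exact hne (scomp_cancel h' h)
    ext i j
    by_cases h : SComp (s i) t (s j)
    · exact (hM2 i j (not_not_intro h)).trans rfl
    · exact (hM1 i j h).trans rfl
  · -- unital
    refine ⟨1, ?_, fun r _ => ⟨one_mul r, mul_one r⟩⟩
    have hone : (1 : Matrix (Fin n) (Fin n) K) = ∑ i, Matrix.single i i (1 : K) := by
      ext a b
      rw [Matrix.one_apply, Matrix.sum_apply]
      by_cases hab : a = b
      · subst hab
        rw [if_pos rfl]
        simp [Matrix.single, and_self]
      · rw [if_neg hab]
        refine (Finset.sum_eq_zero fun x _ => ?_).symm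
        exact Matrix.single_apply_of_ne _ _ _ _ _
          (fun h => hab (h.1 ▸ h.2))
    rw [hone]
    apply Submodule.sum_mem
    intro i _
    apply Submodule.mem_iSup_of_mem ⟨(s i).1, (s i).1, 𝟙 (s i).1⟩
    exact Submodule.subset_span ⟨i, i, scomp_id (s i), rfl⟩
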